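/- Let l ≥ 1 and let k be the integer with 2^{k-1} < l ≤ 2^k, and let 0 ≤ l ≤ m. Then S_0(m+l) + S_0(m-l) - 2 S_0(m) = l if and only if m ≡ l (mod 2^{k+1}) or m ≡ -l (mod 2^{k+1}). -/

import Mathlib

open Finset

/-- Weighted binary digit sum: `s_p(n) = ∑_j 2^{pj} ε_j(n)`. -/
noncomputable def sWeight (p : ℝ) (n : ℕ) : ℝ :=
  ∑ j ∈ Finset.range n, if n.testBit j then (2:ℝ) ^ (p * (j:ℝ)) else 0

/-- `S_p(n) = ∑_{m=0}^{n-1} s_p(m)`. -/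
noncomputable def SWeight (p : ℝ) (n : ℕ) : ℝ :=
  ∑ m ∈ Finset.range n, sWeight p m

namespace SZeroAux

/-- binary digit sum -/
def s (n : ℕ) : ℕ := (Nat.digits 2 n).sum

lemma s_zero : s 0 = 0 := by simp [s]

lemma s_rec (n : ℕ) : s n = n % 2 + s (n / 2) := by
  rcases Nat.eq_zero_or_pos n with h | h
  · subst h; simp [s_zero]
  · unfold s
    rw [Nat.digits_def' (by norm_num : (1:ℕ) < 2) h, List.sum_cons]

lemma s_two_mul (n : ℕ) : s (2 * n) = s n := by
  rw [s_rec (2*n)]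
  have h1 : (2*n) % 2 = 0 := by omega
  have h2 : (2*n) / 2 = n := by omega
  rw [h1, h2]; omega

lemma s_two_mul_add_one (n : ℕ) : s (2 * n + 1) = s n + 1 := by
  rw [s_rec (2*n+1)]
  have h1 : (2*n+1) % 2 = 1 := by omega
  have h2 : (2*n+1) / 2 = n := by omega
  rw [h1, h2]; omega

/-- partial sums of digit sums -/
def S (n : ℕ) : ℕ := ∑ m ∈ Finset.range n, s m

lemma S_zero : S 0 = 0 := rfl

lemma S_succ (n : ℕ) : S (n + 1) = S n + s n := Finset.sum_range_succ _ _

lemma S_two_mul (n : ℕ) : S (2 * n) = 2 * S n + n := by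
  induction n with
  | zero => rfl
  | succ n ih =>
    have h : 2 * (n + 1) = (2 * n + 1) + 1 := by ring
    rw [h, S_succ, S_succ, ih, s_two_mul, s_two_mul_add_one, S_succ]
    ring

lemma S_two_mul_add_one (n : ℕ) : S (2 * n + 1) = 2 * S n + n + s n := by
  rw [S_succ, S_two_mul, s_two_mul]

lemma bitcount (J : ℕ) : ∀ n : ℕ, n < 2 ^ J →
    (∑ j ∈ Finset.range J, if n.testBit j then (1:ℕ) else 0) = s n := by
  induction J with
  | zero =>
    intro n hn
    interval_cases n
    simp [s_zero]
  | succ J ih =>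
    intro n hn
    rw [Finset.sum_range_succ']
    have ht : ∀ j, n.testBit (j + 1) = (n / 2).testBit j := fun j => Nat.testBit_succ n j
    have h2 : (∑ j ∈ Finset.range J, if n.testBit (j+1) then (1:ℕ) else 0)
        = s (n / 2) := by
      rw [Finset.sum_congr rfl (fun j _ => by rw [ht j])]
      exact ih (n / 2) (by omega)
    rw [h2, Nat.testBit_zero, s_rec n]
    rcases Nat.even_or_odd n with he | ho
    · have : n % 2 = 0 := Nat.even_iff.1 he
      simp [this]
    · have : n % 2 = 1 := Nat.odd_iff.1 ho
      simp [this]; omega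

lemma sWeight_eq (n : ℕ) : sWeight 0 n = (s n : ℝ) := by
  unfold sWeight
  have h : ∀ j : ℕ, (if n.testBit j then (2:ℝ) ^ ((0:ℝ) * (j:ℝ)) else 0)
      = ((if n.testBit j then (1:ℕ) else 0 : ℕ) : ℝ) := by
    intro j
    by_cases hb : n.testBit j <;> simp [hb]
  rw [Finset.sum_congr rfl (fun j _ => h j), ← Nat.cast_sum]
  rw [bitcount n n (Nat.lt_two_pow_self (n := n))]

lemma SWeight_eq (n : ℕ) : SWeight 0 n = (S n : ℝ) := by
  unfold SWeight S
  rw [Nat.cast_sum]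
  exact Finset.sum_congr rfl (fun m _ => sWeight_eq m)

/-! ### The integer quantities A and B -/

def A (l m : ℕ) : ℤ := (S (m + l) : ℤ) + S (m - l) - 2 * S m

def B (c m : ℕ) : ℤ := (S (m + c + 1) : ℤ) + S (m - c) - S m - S (m + 1)


lemma A_zero (m : ℕ) : A 0 m = 0 := by simp [A]; ring

lemma B_zero (m : ℕ) : B 0 m = 0 := by simp [B]

lemma R1 (c m : ℕ) (h : c ≤ m) : A (2*c) (2*m) = 2 * A c m := by
  obtain ⟨d, rfl⟩ := Nat.exists_eq_add_of_le h
  unfold A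
  rw [show 2*(c+d) + 2*c = 2*(2*c+d) from by ring,
      show 2*(c+d) - 2*c = 2*d from by omega,
      show c+d+c = 2*c+d from by ring,
      show c+d-c = d from by omega]
  simp only [S_two_mul, S_two_mul_add_one, S_succ]
  push_cast; ring

lemma R2 (c m : ℕ) (h : c ≤ m) : A (2*c) (2*m+1) = A c m + A c (m+1) := by
  obtain ⟨d, rfl⟩ := Nat.exists_eq_add_of_le h
  unfold A
  rw [show 2*(c+d)+1 + 2*c = 2*(2*c+d)+1 from by ring,
      show 2*(c+d)+1 - 2*c = 2*d+1 from by omega,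
      show c+d+c = 2*c+d from by ring,
      show c+d-c = d from by omega,
      show c+d+1+c = (2*c+d)+1 from by ring,
      show c+d+1-c = d+1 from by omega]
  simp only [S_two_mul, S_two_mul_add_one, S_succ]
  push_cast; ring

lemma R3 (c m : ℕ) (h : c + 1 ≤ m) : A (2*c+1) (2*m) = A c m + A (c+1) m - 1 := by
  obtain ⟨d, rfl⟩ := Nat.exists_eq_add_of_le h
  unfold A
  rw [show 2*(c+1+d) + (2*c+1) = 2*((2*c+d)+1)+1 from by ring,
      show 2*(c+1+d) - (2*c+1) = 2*d+1 from by omega,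
      show 2*(c+1+d) = 2*(c+1+d) from rfl,
      show c+1+d+c = (2*c+d)+1 from by ring,
      show c+1+d-c = d+1 from by omega,
      show c+1+d+(c+1) = ((2*c+d)+1)+1 from by ring,
      show c+1+d-(c+1) = d from by omega]
  simp only [S_two_mul, S_two_mul_add_one, S_succ]
  push_cast; ring

lemma R4 (c m : ℕ) (h : c ≤ m) : A (2*c+1) (2*m+1) = 2 * B c m + 1 := by
  obtain ⟨d, rfl⟩ := Nat.exists_eq_add_of_le h
  unfold A B
  rw [show 2*(c+d)+1 + (2*c+1) = 2*((2*c+d)+1) from by ring,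
      show 2*(c+d)+1 - (2*c+1) = 2*d from by omega,
      show c+d+c+1 = (2*c+d)+1 from by ring,
      show c+d-c = d from by omega]
  simp only [S_two_mul, S_two_mul_add_one, S_succ]
  push_cast; ring

lemma R5 (c m : ℕ) (h : c ≤ m) : B (2*c) (2*m) = A c m + B c m := by
  obtain ⟨d, rfl⟩ := Nat.exists_eq_add_of_le h
  unfold A B
  rw [show 2*(c+d) + 2*c + 1 = 2*(2*c+d)+1 from by ring,
      show 2*(c+d) - 2*c = 2*d from by omega,
      show 2*(c+d) + 1 = 2*(c+d)+1 from rfl,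
      show c+d+c = 2*c+d from by ring,
      show c+d-c = d from by omega]
  simp only [S_two_mul, S_two_mul_add_one, S_succ]
  push_cast; ring

lemma R6 (c m : ℕ) (h : c ≤ m) : B (2*c) (2*m+1) = B c m + A c (m+1) := by
  obtain ⟨d, rfl⟩ := Nat.exists_eq_add_of_le h
  unfold A B
  rw [show 2*(c+d)+1 + 2*c + 1 = 2*((2*c+d)+1) from by ring,
      show 2*(c+d)+1 - 2*c = 2*d+1 from by omega,
      show 2*(c+d)+1+1 = 2*((c+d)+1) from by ring,
      show c+d+c+1 = (2*c+d)+1 from by ring,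
      show c+d-c = d from by omega,
      show c+d+1+c = (2*c+d)+1 from by ring,
      show c+d+1-c = d+1 from by omega]
  simp only [S_two_mul, S_two_mul_add_one, S_succ]
  push_cast; ring

lemma R7 (c m : ℕ) (h : c + 1 ≤ m) : B (2*c+1) (2*m) = B c m + A (c+1) m := by
  obtain ⟨d, rfl⟩ := Nat.exists_eq_add_of_le h
  unfold A B
  rw [show 2*(c+1+d) + (2*c+1) + 1 = 2*(((2*c+d)+1)+1) from by ring,
      show 2*(c+1+d) - (2*c+1) = 2*d+1 from by omega,
      show 2*(c+1+d) + 1 = 2*(c+1+d)+1 from rfl,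
      show c+1+d+c+1 = ((2*c+d)+1)+1 from by ring,
      show c+1+d-c = d+1 from by omega,
      show c+1+d+(c+1) = ((2*c+d)+1)+1 from by ring,
      show c+1+d-(c+1) = d from by omega,
      show c+1+d+1 = (c+1+d)+1 from rfl]
  simp only [S_two_mul, S_two_mul_add_one, S_succ]
  push_cast; ring

lemma R8 (c m : ℕ) (h : c ≤ m) : B (2*c+1) (2*m+1) = B c m + A (c+1) (m+1) := by
  obtain ⟨d, rfl⟩ := Nat.exists_eq_add_of_le h
  unfold A B
  rw [show 2*(c+d)+1 + (2*c+1) + 1 = 2*((2*c+d)+1)+1 from by ring,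
      show 2*(c+d)+1 - (2*c+1) = 2*d from by omega,
      show 2*(c+d)+1+1 = 2*((c+d)+1) from by ring,
      show c+d+c+1 = (2*c+d)+1 from by ring,
      show c+d-c = d from by omega,
      show c+d+1+(c+1) = ((2*c+d)+1)+1 from by ring,
      show c+d+1-(c+1) = d from by omega]
  simp only [S_two_mul, S_two_mul_add_one, S_succ]
  push_cast; ring


/-! ### Sizes -/

def Kf (n : ℕ) : ℕ := Nat.size (2*n - 1)
def Hf (n : ℕ) : ℕ := Nat.size (2*n)

lemma size_eq' (a k : ℕ) (h1 : 2^k ≤ a) (h2 : a < 2^(k+1)) : Nat.size a = k + 1 :=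
  le_antisymm (Nat.size_le.2 h2) (Nat.lt_size.2 h1)

lemma Hf_spec (n : ℕ) (hn : 1 ≤ n) : ∃ H, Hf n = H + 1 ∧ 2^H ≤ 2*n ∧ 2*n < 2*2^H := by
  have h1 : 0 < Hf n := Nat.size_pos.2 (by omega)
  refine ⟨Hf n - 1, by omega, ?_, ?_⟩
  · exact Nat.lt_size.1 (show Hf n - 1 < Nat.size (2*n) from by unfold Hf at h1 ⊢; omega)
  · have h2 : 2*n < 2^(Hf n) := Nat.lt_size_self (2*n)
    have h3 : 2^(Hf n) = 2*2^(Hf n - 1) := by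
      rw [← pow_succ']
      congr 1
      omega
    omega

lemma Kf_spec (n : ℕ) (hn : 1 ≤ n) : ∃ K, Kf n = K + 1 ∧ 2^K ≤ 2*n - 1 ∧ 2*n - 1 < 2*2^K := by
  have h1 : 0 < Kf n := Nat.size_pos.2 (by omega)
  refine ⟨Kf n - 1, by omega, ?_, ?_⟩
  · exact Nat.lt_size.1 (show Kf n - 1 < Nat.size (2*n - 1) from by unfold Kf at h1 ⊢; omega)
  · have h2 : 2*n - 1 < 2^(Kf n) := Nat.lt_size_self (2*n - 1)
    have h3 : 2^(Kf n) = 2*2^(Kf n - 1) := by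
      rw [← pow_succ']
      congr 1
      omega
    omega

lemma Kf_facts (n : ℕ) (hn : 1 ≤ n) : 2*n ≤ 2^(Kf n) ∧ 2^(Kf n) < 4*n ∧ 1 ≤ Kf n := by
  obtain ⟨K, hK, h1, h2⟩ := Kf_spec n hn
  have h3 : 2^(Kf n) = 2*2^K := by rw [hK, pow_succ']
  omega

lemma Hf_facts (n : ℕ) (hn : 1 ≤ n) : 2*n < 2^(Hf n) ∧ 2^(Hf n) ≤ 4*n ∧ 1 ≤ Hf n := by
  obtain ⟨H, hH, h1, h2⟩ := Hf_spec n hn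
  have h3 : 2^(Hf n) = 2*2^H := by rw [hH, pow_succ']
  omega

lemma Kf_le_Hf (n : ℕ) : Kf n ≤ Hf n := Nat.size_le_size (by omega)

lemma F1 (c : ℕ) (hc : 1 ≤ c) : Kf (2*c) = Kf c + 1 := by
  obtain ⟨hK1, hK2, hK3⟩ := Kf_facts c hc
  have h : Nat.size (2*(2*c) - 1) = Kf c + 1 := by
    apply size_eq'
    · omega
    · rw [pow_succ']; omega
  exact h

lemma F2 (c : ℕ) (hc : 1 ≤ c) : Kf (2*c+1) = Hf c + 1 := by
  obtain ⟨hH1, hH2, hH3⟩ := Hf_facts c hc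
  have h : Nat.size (2*(2*c+1) - 1) = Hf c + 1 := by
    apply size_eq'
    · omega
    · rw [pow_succ']; omega
  exact h

lemma F3 (c : ℕ) (hc : 1 ≤ c) : Hf (2*c) = Hf c + 1 := by
  obtain ⟨hH1, hH2, hH3⟩ := Hf_facts c hc
  have h : Nat.size (2*(2*c)) = Hf c + 1 := by
    apply size_eq'
    · omega
    · rw [pow_succ']; omega
  exact h

lemma F4 (c : ℕ) (hc : 1 ≤ c) : Hf (2*c+1) = Hf c + 1 := by
  obtain ⟨H, hH, h1, h2⟩ := Hf_spec c hc
  rw [hH]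
  have h : Nat.size (2*(2*c+1)) = (H+1) + 1 := by
    apply size_eq'
    · rw [pow_succ']; omega
    · rw [pow_succ', pow_succ']; omega
  exact h

lemma F5 (c : ℕ) (hc : 1 ≤ c) : Kf (c+1) = Hf c := by
  obtain ⟨H, hH, h1, h2⟩ := Hf_spec c hc
  rw [hH]
  have h : Nat.size (2*(c+1) - 1) = H + 1 := by
    apply size_eq'
    · omega
    · rw [pow_succ']; omega
  exact h

lemma Kf_one : Kf 1 = 1 := by
  unfold Kf
  norm_num [Nat.size_one]

lemma Hf_one : Hf 1 = 2 := by
  unfold Hf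
  exact size_eq' 2 1 (by norm_num) (by norm_num)

/-! ### divisibility toolkit -/

lemma scale' (j : ℕ) {x y : ℤ} (h : x = 2*y) : (2:ℤ)^(j+1) ∣ x ↔ (2:ℤ)^j ∣ y := by
  subst h
  rw [pow_succ']
  exact mul_dvd_mul_iff_left (by norm_num : (2:ℤ) ≠ 0)

lemma two_dvd_of {j : ℕ} (hj : 1 ≤ j) {y : ℤ} (h : (2:ℤ)^j ∣ y) : (2:ℤ) ∣ y :=
  dvd_trans (dvd_pow_self 2 (by omega)) h

/-! ### The statements -/

def condA (n m : ℕ) : Prop :=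
  (2:ℤ)^(Kf n) ∣ ((m:ℤ) - n) ∨ (2:ℤ)^(Kf n) ∣ ((m:ℤ) + n)

def condB (n m : ℕ) : Prop :=
  (2:ℤ)^(Hf n) ∣ ((m:ℤ) - n) ∨ (2:ℤ)^(Hf n) ∣ ((m:ℤ) + n + 1)

def PA (n m : ℕ) : Prop := A n m ≤ (n:ℤ) ∧ (A n m = (n:ℤ) ↔ condA n m)

def PB (n m : ℕ) : Prop := B n m ≤ (n:ℤ) ∧ (B n m = (n:ℤ) ↔ condB n m)

lemma baseA : ∀ m, 1 ≤ m → PA 1 m := by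
  intro m
  induction m using Nat.strong_induction_on with
  | _ m ih =>
    intro hm
    rcases Nat.even_or_odd m with he | ho
    · obtain ⟨m', rfl⟩ := he
      rw [show m' + m' = 2*m' from by ring] at hm ⊢
      have hm' : 1 ≤ m' := by omega
      have e : A 1 (2*m') = A 1 m' - 1 := by
        have h3 := R3 0 m' (by omega)
        rw [A_zero] at h3
        norm_num at h3
        omega
      obtain ⟨h1, h2⟩ := ih m' (by omega) hm'
      unfold PA condA
      rw [Kf_one, pow_one]
      refine ⟨by push_cast at h1 ⊢; omega, ?_⟩
      constructor
      · intro hq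
        exfalso
        push_cast at hq h1
        omega
      · rintro (hd | hd) <;> (exfalso; push_cast at hd; omega)
    · obtain ⟨m', rfl⟩ := ho
      have e : A 1 (2*m'+1) = 1 := by
        have h4 := R4 0 m' (by omega)
        rw [B_zero] at h4
        norm_num at h4
        omega
      unfold PA condA
      rw [Kf_one, pow_one]
      refine ⟨by push_cast; omega, ?_⟩
      constructor
      · intro _
        left
        refine ⟨(m' : ℤ), by push_cast; ring⟩
      · intro _
        push_cast
        omega

lemma baseB : ∀ m, 1 ≤ m → PB 1 m := by
  intro m hm
  rcases Nat.even_or_odd m with he | ho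
  · obtain ⟨m', rfl⟩ := he
    rw [show m' + m' = 2*m' from by ring] at hm ⊢
    have hm' : 1 ≤ m' := by omega
    have e : B 1 (2*m') = A 1 m' := by
      have h7 := R7 0 m' (by omega)
      rw [B_zero] at h7
      norm_num at h7
      omega
    obtain ⟨h1, h2⟩ := baseA m' hm'
    unfold condA at h2
    rw [Kf_one, pow_one] at h2
    unfold PB condB
    rw [Hf_one, show ((2:ℤ)^2) = 4 from by norm_num]
    refine ⟨by push_cast at h1 ⊢; omega, ?_⟩
    constructor
    · intro hq
      have hA : A 1 m' = ((1:ℕ):ℤ) := by omega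
      right
      rcases h2.1 hA with hd | hd <;>
        (push_cast at hd ⊢; omega)
    · rintro (hd | hd)
      · exfalso
        push_cast at hd
        omega
      · have hA : A 1 m' = ((1:ℕ):ℤ) := by
          apply h2.2
          right
          push_cast at hd ⊢
          omega
        omega
  · obtain ⟨m', rfl⟩ := ho
    have e : B 1 (2*m'+1) = A 1 (m'+1) := by
      have h8 := R8 0 m' (by omega)
      rw [B_zero] at h8
      norm_num at h8
      omega
    obtain ⟨h1, h2⟩ := baseA (m'+1) (by omega)
    unfold condA at h2
    rw [Kf_one, pow_one] at h2
    unfold PB condB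
    rw [Hf_one, show ((2:ℤ)^2) = 4 from by norm_num]
    refine ⟨by push_cast at h1 ⊢; omega, ?_⟩
    constructor
    · intro hq
      have hA : A 1 (m'+1) = ((1:ℕ):ℤ) := by omega
      left
      rcases h2.1 hA with hd | hd <;>
        (push_cast at hd ⊢; omega)
    · rintro (hd | hd)
      · have hA : A 1 (m'+1) = ((1:ℕ):ℤ) := by
          apply h2.2
          left
          push_cast at hd ⊢
          omega
        omega
      · exfalso
        push_cast at hd
        omega


lemma mainlemma (n : ℕ) : 1 ≤ n → ∀ m, (n ≤ m → PA n m) ∧ (n ≤ m → PB n m) := by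
  induction n using Nat.strong_induction_on with
  | _ n ih =>
  intro hn
  rcases eq_or_lt_of_le hn with h1 | h2
  · rw [← h1]
    exact fun m => ⟨fun hm => baseA m hm, fun hm => baseB m hm⟩
  · rcases Nat.even_or_odd n with he | ho
    · -- n = 2c
      obtain ⟨c, rfl⟩ := he
      rw [show c + c = 2*c from by ring] at h2 ⊢
      have hc : 1 ≤ c := by omega
      have IHc := ih c (by omega) hc
      have hKpos : 1 ≤ Kf c := (Kf_facts c hc).2.2
      have hHpos : 1 ≤ Hf c := (Hf_facts c hc).2.2
      intro m
      constructor
      · -- A part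
        intro hm
        rcases Nat.even_or_odd m with hme | hmo
        · obtain ⟨m', rfl⟩ := hme
          rw [show m' + m' = 2*m' from by ring] at hm ⊢
          have hcm : c ≤ m' := by omega
          have e := R1 c m' hcm
          have hPA := (IHc m').1 hcm
          unfold PA condA at hPA ⊢
          obtain ⟨hA1, hA2⟩ := hPA
          rw [F1 c hc]
          have hx : ((2*m' : ℕ):ℤ) - ((2*c : ℕ):ℤ) = 2*((m':ℤ) - (c:ℤ)) := by push_cast; ring
          have hx' : ((2*m' : ℕ):ℤ) + ((2*c : ℕ):ℤ) = 2*((m':ℤ) + (c:ℤ)) := by push_cast; ring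
          refine ⟨by push_cast; omega, ?_, ?_⟩
          · intro hq
            have hAc : A c m' = ((c:ℕ):ℤ) := by push_cast at hq ⊢; omega
            rcases hA2.1 hAc with hd | hd
            · exact Or.inl ((scale' (Kf c) hx).2 hd)
            · exact Or.inr ((scale' (Kf c) hx').2 hd)
          · intro hq
            have hAc : A c m' = ((c:ℕ):ℤ) := by
              apply hA2.2
              rcases hq with hd | hd
              · exact Or.inl ((scale' (Kf c) hx).1 hd)
              · exact Or.inr ((scale' (Kf c) hx').1 hd)
            push_cast at hAc ⊢
            omega
        · obtain ⟨m', rfl⟩ := hmo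
          have hcm : c ≤ m' := by omega
          have e := R2 c m' hcm
          have hPA := (IHc m').1 hcm
          have hPC := (IHc (m'+1)).1 (by omega)
          unfold PA condA at hPA hPC ⊢
          obtain ⟨hA1, hA2⟩ := hPA
          obtain ⟨hC1, hC2⟩ := hPC
          rw [F1 c hc]
          refine ⟨by push_cast; omega, ?_, ?_⟩
          · intro hq
            exfalso
            have hv1 : A c m' = ((c:ℕ):ℤ) := by push_cast at hq ⊢; omega
            have hv2 : A c (m'+1) = ((c:ℕ):ℤ) := by push_cast at hq ⊢; omega
            rcases hA2.1 hv1 with hd | hd <;> rcases hC2.1 hv2 with he' | he' <;>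
            · have t1 := two_dvd_of hKpos hd
              have t2 := two_dvd_of hKpos he'
              push_cast at t1 t2
              omega
          · intro hq
            exfalso
            rcases hq with hd | hd <;>
            · have t := two_dvd_of (show 1 ≤ Kf c + 1 by omega) hd
              push_cast at t
              omega
      · -- B part
        intro hm
        rcases Nat.even_or_odd m with hme | hmo
        · obtain ⟨m', rfl⟩ := hme
          rw [show m' + m' = 2*m' from by ring] at hm ⊢
          have hcm : c ≤ m' := by omega
          have e := R5 c m' hcm
          have hPA := (IHc m').1 hcm
          have hPB := (IHc m').2 hcm
          unfold PA condA at hPA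
          unfold PB condB at hPB ⊢
          obtain ⟨hA1, hA2⟩ := hPA
          obtain ⟨hB1, hB2⟩ := hPB
          rw [F3 c hc]
          have hx : ((2*m' : ℕ):ℤ) - ((2*c : ℕ):ℤ) = 2*((m':ℤ) - (c:ℤ)) := by push_cast; ring
          refine ⟨by push_cast; omega, ?_, ?_⟩
          · intro hq
            have hv1 : A c m' = ((c:ℕ):ℤ) := by push_cast at hq ⊢; omega
            have hv2 : B c m' = ((c:ℕ):ℤ) := by push_cast at hq ⊢; omega
            rcases hB2.1 hv2 with hd | hd
            · exact Or.inl ((scale' (Hf c) hx).2 hd)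
            · exfalso
              have hd' := dvd_trans (pow_dvd_pow 2 (Kf_le_Hf c)) hd
              rcases hA2.1 hv1 with he' | he' <;>
              · have t1 := two_dvd_of hKpos hd'
                have t2 := two_dvd_of hKpos he'
                push_cast at t1 t2
                omega
          · rintro (hd | hd)
            · have hdm := (scale' (Hf c) hx).1 hd
              have hBv := hB2.2 (Or.inl hdm)
              have hAv := hA2.2 (Or.inl (dvd_trans (pow_dvd_pow 2 (Kf_le_Hf c)) hdm))
              push_cast at hBv hAv ⊢
              omega
            · exfalso
              have t := two_dvd_of (show 1 ≤ Hf c + 1 by omega) hd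
              push_cast at t
              omega
        · obtain ⟨m', rfl⟩ := hmo
          have hcm : c ≤ m' := by omega
          have e := R6 c m' hcm
          have hPB := (IHc m').2 hcm
          have hPC := (IHc (m'+1)).1 (by omega)
          unfold PA condA at hPC
          unfold PB condB at hPB ⊢
          obtain ⟨hB1, hB2⟩ := hPB
          obtain ⟨hC1, hC2⟩ := hPC
          rw [F3 c hc]
          have hx' : ((2*m'+1 : ℕ):ℤ) + ((2*c : ℕ):ℤ) + 1 = 2*((m':ℤ) + (c:ℤ) + 1) := by push_cast; ring
          refine ⟨by push_cast; omega, ?_, ?_⟩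
          · intro hq
            have hv1 : B c m' = ((c:ℕ):ℤ) := by push_cast at hq ⊢; omega
            have hv2 : A c (m'+1) = ((c:ℕ):ℤ) := by push_cast at hq ⊢; omega
            rcases hB2.1 hv1 with hd | hd
            · exfalso
              rcases hC2.1 hv2 with he' | he' <;>
              · have t1 := two_dvd_of hHpos hd
                have t2 := two_dvd_of hKpos he'
                push_cast at t1 t2
                omega
            · exact Or.inr ((scale' (Hf c) hx').2 hd)
          · rintro (hd | hd)
            · exfalso
              have t := two_dvd_of (show 1 ≤ Hf c + 1 by omega) hd
              push_cast at t
              omega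
            · have hdm := (scale' (Hf c) hx').1 hd
              have hBv := hB2.2 (Or.inr hdm)
              have hCv : A c (m'+1) = ((c:ℕ):ℤ) := by
                apply hC2.2
                right
                have hcast : ((m'+1 : ℕ):ℤ) + ((c : ℕ):ℤ) = (m':ℤ) + (c:ℤ) + 1 := by push_cast; ring
                rw [hcast]
                exact dvd_trans (pow_dvd_pow 2 (Kf_le_Hf c)) hdm
              push_cast at hBv hCv ⊢
              omega
    · -- n = 2c+1
      obtain ⟨c, rfl⟩ := ho
      have hc : 1 ≤ c := by omega
      have IHc := ih c (by omega) hc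
      have IHc1 := ih (c+1) (by omega) (by omega)
      have hKpos : 1 ≤ Kf c := (Kf_facts c hc).2.2
      have hHpos : 1 ≤ Hf c := (Hf_facts c hc).2.2
      intro m
      constructor
      · -- A part
        intro hm
        rcases Nat.even_or_odd m with hme | hmo
        · obtain ⟨m', rfl⟩ := hme
          rw [show m' + m' = 2*m' from by ring] at hm ⊢
          have hcm : c + 1 ≤ m' := by omega
          have e := R3 c m' hcm
          have hPA := (IHc m').1 (by omega)
          have hPC := (IHc1 m').1 hcm
          unfold PA condA at hPA hPC ⊢
          obtain ⟨hA1, hA2⟩ := hPA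
          obtain ⟨hC1, hC2⟩ := hPC
          rw [F2 c hc]
          refine ⟨by push_cast; omega, ?_, ?_⟩
          · intro hq
            exfalso
            push_cast at hq hA1 hC1
            omega
          · intro hq
            exfalso
            rcases hq with hd | hd <;>
            · have t := two_dvd_of (show 1 ≤ Hf c + 1 by omega) hd
              push_cast at t
              omega
        · obtain ⟨m', rfl⟩ := hmo
          have hcm : c ≤ m' := by omega
          have e := R4 c m' hcm
          have hPB := (IHc m').2 hcm
          unfold PA condA
          unfold PB condB at hPB
          obtain ⟨hB1, hB2⟩ := hPB
          rw [F2 c hc]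
          have hx : ((2*m'+1 : ℕ):ℤ) - ((2*c+1 : ℕ):ℤ) = 2*((m':ℤ) - (c:ℤ)) := by push_cast; ring
          have hx' : ((2*m'+1 : ℕ):ℤ) + ((2*c+1 : ℕ):ℤ) = 2*((m':ℤ) + (c:ℤ) + 1) := by push_cast; ring
          refine ⟨by push_cast; omega, ?_, ?_⟩
          · intro hq
            have hBv : B c m' = ((c:ℕ):ℤ) := by push_cast at hq ⊢; omega
            rcases hB2.1 hBv with hd | hd
            · exact Or.inl ((scale' (Hf c) hx).2 hd)
            · exact Or.inr ((scale' (Hf c) hx').2 hd)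
          · intro hq
            have hBv : B c m' = ((c:ℕ):ℤ) := by
              apply hB2.2
              rcases hq with hd | hd
              · exact Or.inl ((scale' (Hf c) hx).1 hd)
              · exact Or.inr ((scale' (Hf c) hx').1 hd)
            push_cast at hBv ⊢
            omega
      · -- B part
        intro hm
        rcases Nat.even_or_odd m with hme | hmo
        · obtain ⟨m', rfl⟩ := hme
          rw [show m' + m' = 2*m' from by ring] at hm ⊢
          have hcm : c + 1 ≤ m' := by omega
          have e := R7 c m' hcm
          have hPB := (IHc m').2 (by omega)
          have hPC := (IHc1 m').1 hcm
          unfold PA condA at hPC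
          unfold PB condB at hPB ⊢
          obtain ⟨hB1, hB2⟩ := hPB
          obtain ⟨hC1, hC2⟩ := hPC
          rw [F4 c hc]
          rw [F5 c hc] at hC2
          have hx' : ((2*m' : ℕ):ℤ) + ((2*c+1 : ℕ):ℤ) + 1 = 2*((m':ℤ) + (c:ℤ) + 1) := by push_cast; ring
          refine ⟨by push_cast; omega, ?_, ?_⟩
          · intro hq
            have hBv : B c m' = ((c:ℕ):ℤ) := by push_cast at hq ⊢; omega
            have hCv : A (c+1) m' = ((c+1:ℕ):ℤ) := by push_cast at hq ⊢; omega
            rcases hB2.1 hBv with hd | hd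
            · exfalso
              rcases hC2.1 hCv with he' | he' <;>
              · have t1 := two_dvd_of hHpos hd
                have t2 := two_dvd_of hHpos he'
                push_cast at t1 t2
                omega
            · exact Or.inr ((scale' (Hf c) hx').2 hd)
          · rintro (hd | hd)
            · exfalso
              have t := two_dvd_of (show 1 ≤ Hf c + 1 by omega) hd
              push_cast at t
              omega
            · have hdm := (scale' (Hf c) hx').1 hd
              have hBv := hB2.2 (Or.inr hdm)
              have hCv : A (c+1) m' = ((c+1:ℕ):ℤ) := by
                apply hC2.2
                right
                have hcast : ((m' : ℕ):ℤ) + ((c+1 : ℕ):ℤ) = (m':ℤ) + (c:ℤ) + 1 := by push_cast; ring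
                rw [hcast]
                exact hdm
              push_cast at hBv hCv ⊢
              omega
        · obtain ⟨m', rfl⟩ := hmo
          have hcm : c ≤ m' := by omega
          have e := R8 c m' hcm
          have hPB := (IHc m').2 hcm
          have hPC := (IHc1 (m'+1)).1 (by omega)
          unfold PA condA at hPC
          unfold PB condB at hPB ⊢
          obtain ⟨hB1, hB2⟩ := hPB
          obtain ⟨hC1, hC2⟩ := hPC
          rw [F4 c hc]
          rw [F5 c hc] at hC2
          have hx : ((2*m'+1 : ℕ):ℤ) - ((2*c+1 : ℕ):ℤ) = 2*((m':ℤ) - (c:ℤ)) := by push_cast; ring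
          refine ⟨by push_cast; omega, ?_, ?_⟩
          · intro hq
            have hBv : B c m' = ((c:ℕ):ℤ) := by push_cast at hq ⊢; omega
            have hCv : A (c+1) (m'+1) = ((c+1:ℕ):ℤ) := by push_cast at hq ⊢; omega
            rcases hB2.1 hBv with hd | hd
            · exact Or.inl ((scale' (Hf c) hx).2 hd)
            · exfalso
              rcases hC2.1 hCv with he' | he' <;>
              · have t1 := two_dvd_of hHpos hd
                have t2 := two_dvd_of hHpos he'
                push_cast at t1 t2
                omega
          · rintro (hd | hd)
            · have hdm := (scale' (Hf c) hx).1 hd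
              have hBv := hB2.2 (Or.inl hdm)
              have hCv : A (c+1) (m'+1) = ((c+1:ℕ):ℤ) := by
                apply hC2.2
                left
                have hcast : ((m'+1 : ℕ):ℤ) - ((c+1 : ℕ):ℤ) = (m':ℤ) - (c:ℤ) := by push_cast; ring
                rw [hcast]
                exact hdm
              push_cast at hBv hCv ⊢
              omega
            · exfalso
              have t := two_dvd_of (show 1 ≤ Hf c + 1 by omega) hd
              push_cast at t
              omega

end SZeroAux

theorem SWeight_zero_midpoint_eq_iff (m l : ℕ) (hl : 1 ≤ l) (hlm : l ≤ m) (k : ℕ)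
    (hk1 : l ≤ 2 ^ k) (hk2 : 2 ^ k < 2 * l) :
    SWeight 0 (m + l) + SWeight 0 (m - l) - 2 * SWeight 0 m = (l:ℝ)
      ↔ (m:ℤ) ≡ (l:ℤ) [ZMOD (2:ℤ) ^ (k + 1)] ∨ (m:ℤ) ≡ -(l:ℤ) [ZMOD (2:ℤ) ^ (k + 1)] := by
  have hKl : SZeroAux.Kf l = k + 1 := by
    have h : Nat.size (2*l - 1) = k + 1 := by
      apply SZeroAux.size_eq'
      · omega
      · rw [pow_succ']; omega
    exact h
  have hPA := (SZeroAux.mainlemma l hl m).1 hlm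
  unfold SZeroAux.PA at hPA
  obtain ⟨hb, hiff⟩ := hPA
  unfold SZeroAux.condA at hiff
  rw [hKl] at hiff
  have hS : SWeight 0 (m+l) + SWeight 0 (m-l) - 2 * SWeight 0 m = ((SZeroAux.A l m : ℤ) : ℝ) := by
    rw [SZeroAux.SWeight_eq, SZeroAux.SWeight_eq, SZeroAux.SWeight_eq]
    unfold SZeroAux.A
    push_cast
    ring
  rw [hS]
  have hcast : (((SZeroAux.A l m : ℤ)):ℝ) = (l:ℝ) ↔ SZeroAux.A l m = ((l:ℕ):ℤ) := by
    constructor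
    · intro h; exact_mod_cast h
    · intro h; rw [h]; push_cast; rfl
  rw [hcast, hiff]
  constructor
  · rintro (hd | hd)
    · left
      rw [Int.modEq_iff_dvd]
      exact dvd_sub_comm.mp hd
    · right
      rw [Int.modEq_iff_dvd]
      rw [show -(l:ℤ) - (m:ℤ) = -((m:ℤ) + (l:ℤ)) from by ring]
      exact dvd_neg.mpr hd
  · rintro (hd | hd)
    · left
      rw [Int.modEq_iff_dvd] at hd
      exact dvd_sub_comm.mp hd
    · right
      rw [Int.modEq_iff_dvd] at hd
      rw [show -(l:ℤ) - (m:ℤ) = -((m:ℤ) + (l:ℤ)) from by ring] at hd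
      exact dvd_neg.mp hd
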